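/- arXiv:0912.2379 — 2 statements merged into one kernel-verified Lean document; each statement's English description precedes it below -/
import Mathlib

section
/- For α ∈ (0,1), n ≥ 1, f : I_α → ℝ of class C¹ with ‖f‖_{C¹} ≤ 1, and θ ∈ ℂ: on the interior of each cylinder I_j ∈ 𝒫_n, the derivative of e^{θ S_n f}/(T_α^n)' satisfies |(e^{θ S_n f}/(T_α^n)')'(x)| ≤ e^{n|θ|·‖f‖_∞} · (|θ|·‖f'‖_∞ + 2)/(1 − γ_α), where γ_α = max{α², (α−1)²}. -/
set_option maxHeartbeats 1000000

open Set

/-- Nakada's α-continued fraction map on `[α-1, α]`. -/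
noncomputable def T (α : ℝ) (x : ℝ) : ℝ :=
  if x = 0 then 0 else 1 / |x| - ⌊1 / |x| + 1 - α⌋

namespace CF

/-- Single Möbius branch `y ↦ e/y - m`. -/
noncomputable def Br (p : ℝ × ℤ) (y : ℝ) : ℝ := p.1 / y - p.2

/-- Composite of a list of branches (head applied first). -/
noncomputable def Bc : List (ℝ × ℤ) → ℝ → ℝ
  | [], y => y
  | p :: L, y => Bc L (Br p y)

/-- Derivative of the composite. -/
noncomputable def Dc : List (ℝ × ℤ) → ℝ → ℝ
  | [], _ => 1
  | p :: L, y => (-p.1 / y ^ 2) * Dc L (Br p y)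

/-- Birkhoff-type sum along the branch orbit. -/
noncomputable def Sc (f : ℝ → ℝ) : List (ℝ × ℤ) → ℝ → ℝ
  | [], _ => 0
  | p :: L, y => f y + Sc f L (Br p y)

/-- Validity of branch data at a point. -/
def Ok (α : ℝ) : List (ℝ × ℤ) → ℝ → Prop
  | [], _ => True
  | p :: L, y => (p.1 = 1 ∨ p.1 = -1) ∧ y ∈ Icc (α - 1) α ∧ y ≠ 0 ∧ Ok α L (Br p y)

lemma Bc_append_singleton (L : List (ℝ × ℤ)) (p : ℝ × ℤ) (y : ℝ) :
    Bc (L ++ [p]) y = Br p (Bc L y) := by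
  induction L generalizing y with
  | nil => rfl
  | cons q L ih => show Bc (L ++ [p]) (Br q y) = _; rw [ih]; rfl

lemma ok_of (α : ℝ) (L : List (ℝ × ℤ)) (y : ℝ)
    (h1 : ∀ p ∈ L, p.1 = 1 ∨ p.1 = -1)
    (h2 : ∀ i < L.length, Bc (L.take i) y ∈ Icc (α - 1) α ∧ Bc (L.take i) y ≠ 0) :
    Ok α L y := by
  induction L generalizing y with
  | nil => trivial
  | cons p L ih =>
    have h0 := h2 0 (by simp)
    refine ⟨h1 p (by simp), h0.1, h0.2, ?_⟩
    refine ih _ (fun q hq => h1 q (by simp [hq])) (fun i hi => ?_)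
    have := h2 (i + 1) (by simpa using hi)
    simpa [Bc] using this

lemma T_zero (α : ℝ) : T α 0 = 0 := by simp [T]

lemma T_iterate_zero (α : ℝ) (k : ℕ) : (T α)^[k] 0 = 0 := by
  induction k with
  | zero => rfl
  | succ k ih => rw [Function.iterate_succ_apply', ih, T_zero]

lemma T_neg (α y : ℝ) : T α (-y) = T α y := by
  rcases eq_or_ne y 0 with h | h
  · simp [h]
  · simp [T, h, neg_eq_zero, abs_neg]

lemma T_mem_Ico (α : ℝ) (hα : α ∈ Ioo (0:ℝ) 1) (y : ℝ) : T α y ∈ Ico (α - 1) α := by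
  rcases eq_or_ne y 0 with h | h
  · simp only [h, T_zero]
    constructor <;> [linarith [hα.2]; exact hα.1]
  · have : T α y = Int.fract (1 / |y| + 1 - α) + α - 1 := by
      simp only [T, h, if_false, Int.fract]
      ring
    rw [this]
    have h1 := Int.fract_nonneg (1 / |y| + 1 - α)
    have h2 := Int.fract_lt_one (1 / |y| + 1 - α)
    constructor <;> linarith

/-- `T` at the explicit points `±1/(m+β)`. -/
lemma T_at_inv (α : ℝ) (hα : α ∈ Ioo (0:ℝ) 1) (β : ℝ) (hβ : β ∈ Ico (α - 1) α)
    (m : ℕ) (hm : 1 ≤ m) (e : ℝ) (he : e = 1 ∨ e = -1) :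
    T α (e / ((m : ℝ) + β)) = β := by
  have hmβ : (0:ℝ) < (m : ℝ) + β := by
    have : (1:ℝ) ≤ (m : ℝ) := by exact_mod_cast hm
    have := hβ.1; have := hα.1; nlinarith
  have habs : |e / ((m : ℝ) + β)| = 1 / ((m : ℝ) + β) := by
    rcases he with h | h <;> rw [h] <;>
      simp [abs_div, abs_of_pos hmβ, le_of_lt hmβ]
  have hne : e / ((m : ℝ) + β) ≠ 0 := by
    rcases he with h | h <;> rw [h] <;> simp [ne_of_gt hmβ, div_eq_zero_iff]
  have hinv : 1 / |e / ((m : ℝ) + β)| = (m : ℝ) + β := by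
    rw [habs]; field_simp
  simp only [T, hne, if_false, hinv]
  have hfl : ⌊(m : ℝ) + β + 1 - α⌋ = (m : ℤ) := by
    have : (m : ℝ) + β + 1 - α = (m : ℤ) + (β + 1 - α) := by push_cast; ring
    rw [this, Int.floor_intCast_add]
    have h1 : (0:ℝ) ≤ β + 1 - α := by have := hβ.1; linarith
    have h2 : β + 1 - α < 1 := by have := hβ.2; linarith
    have : ⌊β + 1 - α⌋ = 0 := by
      rw [Int.floor_eq_iff]
      norm_num
      constructor <;> linarith
    omega
  rw [hfl]; push_cast; ring

lemma sq_le_gamma {α y : ℝ} (hα : α ∈ Ioo (0:ℝ) 1) (hy : y ∈ Icc (α - 1) α) :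
    y ^ 2 ≤ max (α ^ 2) ((α - 1) ^ 2) := by
  rcases le_or_gt 0 y with h | h
  · exact le_max_of_le_left (by nlinarith [hy.2])
  · exact le_max_of_le_right (by nlinarith [hy.1])

lemma abs_le_one {α y : ℝ} (hα : α ∈ Ioo (0:ℝ) 1) (hy : y ∈ Icc (α - 1) α) : |y| ≤ 1 := by
  rw [abs_le]; constructor <;> [linarith [hy.1, hα.1]; linarith [hy.2, hα.2]]

lemma norm_ofReal' (x : ℝ) : ‖((x : ℝ) : ℂ)‖ = |x| := by
  rw [Complex.norm_real, Real.norm_eq_abs]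

lemma norm_exp_mul_ofReal (θ : ℂ) (r C : ℝ) (h : |r| ≤ C) :
    ‖Complex.exp (θ * (r : ℂ))‖ ≤ Real.exp (‖θ‖ * C) := by
  rw [Complex.norm_exp]
  apply Real.exp_le_exp.2
  have h1 : (θ * (r:ℂ)).re = θ.re * r := by simp [Complex.mul_re]
  rw [h1]
  calc θ.re * r ≤ |θ.re * r| := le_abs_self _
    _ = |θ.re| * |r| := abs_mul _ _
    _ ≤ ‖θ‖ * C := by
        apply mul_le_mul _ h (abs_nonneg _) (norm_nonneg _)
        exact Complex.abs_re_le_norm θ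

lemma norm_exp_div_le (θ : ℂ) (s d g C : ℝ) (h2 : 1 ≤ g * |d|) (hg : 0 < g)
    (h3 : |s| ≤ C) :
    ‖Complex.exp (θ * (s : ℂ)) / ((d : ℝ) : ℂ)‖ ≤ Real.exp (‖θ‖ * C) * g := by
  have hd : 0 < |d| := by nlinarith
  rw [norm_div]
  have hnd : ‖((d:ℝ):ℂ)‖ = |d| := by
    rw [Complex.norm_real, Real.norm_eq_abs]
  rw [hnd]
  rw [div_le_iff₀ hd]
  calc ‖Complex.exp (θ * (s:ℂ))‖ ≤ Real.exp (‖θ‖ * C) := norm_exp_mul_ofReal θ s C h3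
    _ = Real.exp (‖θ‖ * C) * 1 := (mul_one _).symm
    _ ≤ Real.exp (‖θ‖ * C) * (g * |d|) := by
        apply mul_le_mul_of_nonneg_left h2 (Real.exp_nonneg _)
    _ = Real.exp (‖θ‖ * C) * g * |d| := by ring

lemma key (α : ℝ) (hα : α ∈ Ioo (0:ℝ) 1) (f f' : ℝ → ℝ)
    (hf : ∀ x ∈ Icc (α - 1) α, HasDerivAt f (f' x) x)
    (Bf Bf' : ℝ) (hBf : ∀ x ∈ Icc (α - 1) α, |f x| ≤ Bf)
    (hBf' : ∀ x ∈ Icc (α - 1) α, |f' x| ≤ Bf') (θ : ℂ) :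
    ∀ (L : List (ℝ × ℤ)) (y : ℝ), Ok α L y →
      HasDerivAt (Bc L) (Dc L y) y ∧
      1 ≤ (max (α ^ 2) ((α - 1) ^ 2)) ^ L.length * |Dc L y| ∧
      |Sc f L y| ≤ L.length * Bf ∧
      ‖Complex.exp (θ * ((Sc f L y : ℝ) : ℂ)) / ((Dc L y : ℝ) : ℂ)‖
        ≤ Real.exp (L.length * ‖θ‖ * Bf) * (max (α ^ 2) ((α - 1) ^ 2)) ^ L.length ∧
      ∃ v : ℂ, HasDerivAt
          (fun t => Complex.exp (θ * ((Sc f L t : ℝ) : ℂ)) / ((Dc L t : ℝ) : ℂ)) v y ∧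
        ‖v‖ ≤ Real.exp (L.length * ‖θ‖ * Bf) *
            ((‖θ‖ * Bf' + 2) * ∑ j ∈ Finset.range L.length, (max (α ^ 2) ((α - 1) ^ 2)) ^ j) := by
  have hBf0 : 0 ≤ Bf := le_trans (abs_nonneg _) (hBf α ⟨by linarith [hα.2], le_refl _⟩)
  have hBf'0 : 0 ≤ Bf' := le_trans (abs_nonneg _) (hBf' α ⟨by linarith [hα.2], le_refl _⟩)
  set γ : ℝ := max (α ^ 2) ((α - 1) ^ 2) with hγdef
  have hγ0 : 0 < γ := lt_max_of_lt_left (by nlinarith [hα.1])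
  have hγ1 : γ < 1 := by
    apply max_lt <;> nlinarith [hα.1, hα.2]
  intro L
  induction L with
  | nil =>
    intro y _
    refine ⟨?_, by simp [Dc], by simp [Sc], ?_, 0, ?_, by simp⟩
    · show HasDerivAt (fun t => t) (Dc [] y) y
      simpa [Dc] using hasDerivAt_id' y
    · show ‖Complex.exp (θ * ((Sc f [] y : ℝ) : ℂ)) / ((Dc [] y : ℝ) : ℂ)‖ ≤ _
      simp [Sc, Dc]
    · show HasDerivAt (fun t => Complex.exp (θ * (((0:ℝ)) : ℂ)) / (((1:ℝ)) : ℂ)) 0 y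
      exact hasDerivAt_const _ _
  | cons p L ih =>
    rintro y ⟨he, hyI, hy0, okL⟩
    obtain ⟨ihB, ihD, ihS, ihV, vL, hvL, hvLb⟩ := ih (Br p y) okL
    set e : ℝ := p.1 with hedef
    set w : ℝ := Br p y with hwdef
    set ℓ : ℕ := L.length with hldef
    have habs_e : |e| = 1 := by rcases he with h | h <;> rw [h] <;> norm_num
    have he0 : e ≠ 0 := by rcases he with h | h <;> rw [h] <;> norm_num
    have hy2 : (0:ℝ) < y ^ 2 := by positivity
    have hsq : y ^ 2 ≤ γ := sq_le_gamma hα hyI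
    have haby : |y| ≤ 1 := abs_le_one hα hyI
    -- derivative of the branch
    have hBr : HasDerivAt (Br p) (-e / y ^ 2) y := by
      have h1 : HasDerivAt (fun t : ℝ => t⁻¹) (-(y ^ 2)⁻¹) y := hasDerivAt_inv hy0
      have h2 := (h1.const_mul e).sub_const (p.2 : ℝ)
      have : e * -(y ^ 2)⁻¹ = -e / y ^ 2 := by field_simp
      rw [this] at h2
      have h3 : (fun t : ℝ => e * t⁻¹ - (p.2:ℝ)) = Br p := by
        funext t; simp [Br, hedef, div_eq_mul_inv]
      rw [h3] at h2
      exact h2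
    have habs_de : |(-e / y ^ 2)| = 1 / y ^ 2 := by
      rw [abs_div, abs_neg, habs_e, abs_of_pos hy2]
    constructor
    · -- HasDerivAt Bc
      have := HasDerivAt.comp y ihB hBr
      have h2 : Dc L w * (-e / y ^ 2) = Dc (p :: L) y := by
        simp [Dc, hwdef, hedef, mul_comm]
      rw [h2] at this
      exact this
    have hDcons : Dc (p :: L) y = (-e / y ^ 2) * Dc L w := by rfl
    have hD2 : 1 ≤ γ ^ (ℓ + 1) * |Dc (p :: L) y| := by
      rw [hDcons, abs_mul, habs_de]
      have h1 : γ ^ (ℓ + 1) * (1 / y ^ 2 * |Dc L w|) = (γ ^ ℓ * |Dc L w|) * (γ / y ^ 2) := by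
        rw [pow_succ]; field_simp
      rw [h1]
      have h2 : (1:ℝ) ≤ γ / y ^ 2 := (one_le_div hy2).2 hsq
      nlinarith [abs_nonneg (Dc L w), pow_nonneg hγ0.le ℓ]
    have hSbound : |Sc f (p :: L) y| ≤ ((p :: L).length : ℝ) * Bf := by
      have h : Sc f (p :: L) y = f y + Sc f L w := by rfl
      rw [h]
      calc |f y + Sc f L w| ≤ |f y| + |Sc f L w| := abs_add_le _ _
        _ ≤ Bf + ℓ * Bf := add_le_add (hBf y hyI) ihS
        _ = ((p :: L).length : ℝ) * Bf := by simp only [List.length_cons]; push_cast; ring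
    have hVbound : ‖Complex.exp (θ * ((Sc f (p :: L) y : ℝ) : ℂ)) / ((Dc (p :: L) y : ℝ) : ℂ)‖
        ≤ Real.exp ((p :: L).length * ‖θ‖ * Bf) * γ ^ (p :: L).length := by
      have h := norm_exp_div_le θ (Sc f (p :: L) y) (Dc (p :: L) y) (γ ^ (ℓ + 1))
        (((p :: L).length : ℝ) * Bf) (by simpa using hD2) (by positivity) hSbound
      calc ‖Complex.exp (θ * ((Sc f (p :: L) y : ℝ) : ℂ)) / ((Dc (p :: L) y : ℝ) : ℂ)‖
          ≤ Real.exp (‖θ‖ * (((p :: L).length : ℝ) * Bf)) * γ ^ (ℓ + 1) := h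
        _ = Real.exp ((p :: L).length * ‖θ‖ * Bf) * γ ^ (p :: L).length := by
            rw [show ‖θ‖ * (((p :: L).length : ℝ) * Bf) = ((p :: L).length : ℝ) * ‖θ‖ * Bf from by ring]
            simp only [List.length_cons]
            rfl
    refine ⟨hD2, hSbound, hVbound, ?_⟩
    -- derivative bound
    have hfd : HasDerivAt f (f' y) y := hf y hyI
    have hfy' : |f' y| ≤ Bf' := hBf' y hyI
    set E : ℂ := Complex.exp (θ * ((f y : ℝ) : ℂ)) with hEdef
    set φw : ℂ := Complex.exp (θ * ((Sc f L w : ℝ) : ℂ)) / ((Dc L w : ℝ) : ℂ) with hpdef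
    have h1 : HasDerivAt (fun t => Complex.exp (θ * ((f t : ℝ) : ℂ)))
        (E * (θ * ((f' y : ℝ) : ℂ))) y := ((hfd.ofReal_comp).const_mul θ).cexp
    have h2 : HasDerivAt (fun t : ℝ => (((-e) * t ^ 2 : ℝ) : ℂ))
        ((((-e) * (2 * y) : ℝ) : ℂ)) y := by
      have h := ((hasDerivAt_pow 2 y).const_mul (-e)).ofReal_comp
      convert h using 2
      push_cast; ring
    have h3 : HasDerivAt
        (fun t => Complex.exp (θ * ((Sc f L (Br p t) : ℝ) : ℂ)) / ((Dc L (Br p t) : ℝ) : ℂ))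
        ((-e / y ^ 2) • vL) y := by have := HasDerivAt.scomp y hvL hBr; exact this
    set B : ℂ := (((-e) * y ^ 2 : ℝ) : ℂ) with hBdef
    set V : ℂ := (E * (θ * ((f' y : ℝ) : ℂ)) * B + E * (((-e) * (2 * y) : ℝ) : ℂ)) * φw
        + (E * B) * ((-e / y ^ 2) • vL) with hVdef
    have hG : HasDerivAt (fun t => (Complex.exp (θ * ((f t : ℝ) : ℂ)) * (((-e) * t ^ 2 : ℝ) : ℂ)) *
        (Complex.exp (θ * ((Sc f L (Br p t) : ℝ) : ℂ)) / ((Dc L (Br p t) : ℝ) : ℂ))) V y :=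
      (h1.mul h2).mul h3
    have heqFG : ∀ t : ℝ, t ≠ 0 →
        Complex.exp (θ * ((Sc f (p :: L) t : ℝ) : ℂ)) / ((Dc (p :: L) t : ℝ) : ℂ)
          = (Complex.exp (θ * ((f t : ℝ) : ℂ)) * (((-e) * t ^ 2 : ℝ) : ℂ)) *
            (Complex.exp (θ * ((Sc f L (Br p t) : ℝ) : ℂ)) / ((Dc L (Br p t) : ℝ) : ℂ)) := by
      intro t ht
      have hS : Sc f (p :: L) t = f t + Sc f L (Br p t) := by simp [Sc]
      have hD : Dc (p :: L) t = (-e / t ^ 2) * Dc L (Br p t) := by rfl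
      rw [hS, hD]
      push_cast
      rw [mul_add, Complex.exp_add]
      rcases eq_or_ne (Dc L (Br p t)) 0 with hd0 | hd0
      · rw [hd0]; push_cast; rw [mul_zero, div_zero, div_zero, mul_zero]
      · have ht' : ((t : ℝ) : ℂ) ≠ 0 := Complex.ofReal_ne_zero.2 ht
        have he0' : ((e : ℝ) : ℂ) ≠ 0 := Complex.ofReal_ne_zero.2 he0
        have hd0' : ((Dc L (Br p t) : ℝ) : ℂ) ≠ 0 := Complex.ofReal_ne_zero.2 hd0
        have he2C : ((e : ℝ) : ℂ) ^ 2 = 1 := by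
          rcases he with h | h <;> rw [h] <;> norm_num
        field_simp
        linear_combination he2C
    have hFG : (fun t => Complex.exp (θ * ((Sc f (p :: L) t : ℝ) : ℂ)) / ((Dc (p :: L) t : ℝ) : ℂ))
        =ᶠ[nhds y] (fun t => (Complex.exp (θ * ((f t : ℝ) : ℂ)) * (((-e) * t ^ 2 : ℝ) : ℂ)) *
          (Complex.exp (θ * ((Sc f L (Br p t) : ℝ) : ℂ)) / ((Dc L (Br p t) : ℝ) : ℂ))) :=
      Filter.eventually_of_mem (isOpen_ne.mem_nhds hy0) (fun t ht => heqFG t ht)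
    refine ⟨V, hG.congr_of_eventuallyEq hFG, ?_⟩
    -- now the norm bound
    have hEb : ‖E‖ ≤ Real.exp (‖θ‖ * Bf) := norm_exp_mul_ofReal θ (f y) Bf (hBf y hyI)
    have hnB : ‖B‖ = y ^ 2 := by
      rw [hBdef, norm_ofReal', abs_mul, abs_neg, habs_e, one_mul, abs_of_pos hy2]
    have hnB' : ‖(((-e) * (2 * y) : ℝ) : ℂ)‖ = 2 * |y| := by
      rw [norm_ofReal', abs_mul, abs_neg, habs_e, one_mul, abs_mul]
      norm_num
    have hnθf : ‖θ * ((f' y : ℝ) : ℂ)‖ = ‖θ‖ * |f' y| := by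
      rw [norm_mul, norm_ofReal']
    have hsm : ‖(-e / y ^ 2) • vL‖ = 1 / y ^ 2 * ‖vL‖ := by
      rw [norm_smul, Real.norm_eq_abs, habs_de]
    have hE0 : (0:ℝ) ≤ Real.exp (‖θ‖ * Bf) := (Real.exp_pos _).le
    have t1 : ‖(E * (θ * ((f' y : ℝ) : ℂ)) * B + E * (((-e) * (2 * y) : ℝ) : ℂ)) * φw‖
        ≤ (Real.exp (‖θ‖ * Bf) * (‖θ‖ * Bf') * y ^ 2 + Real.exp (‖θ‖ * Bf) * (2 * |y|)) * ‖φw‖ := by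
      rw [norm_mul]
      apply mul_le_mul_of_nonneg_right _ (norm_nonneg _)
      apply le_trans (norm_add_le _ _)
      simp only [norm_mul]
      rw [hnB, hnB', norm_ofReal']
      have g1 : ‖E‖ * (‖θ‖ * |f' y|) * y ^ 2 ≤ Real.exp (‖θ‖ * Bf) * (‖θ‖ * Bf') * y ^ 2 := by
        apply mul_le_mul_of_nonneg_right _ hy2.le
        apply mul_le_mul hEb (mul_le_mul_of_nonneg_left hfy' (norm_nonneg θ))
          (by positivity) (Real.exp_nonneg _)
      have g2 : ‖E‖ * (2 * |y|) ≤ Real.exp (‖θ‖ * Bf) * (2 * |y|) :=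
        mul_le_mul_of_nonneg_right hEb (by positivity)
      exact add_le_add g1 g2
    have t2 : ‖(E * B) * ((-e / y ^ 2) • vL)‖ ≤ Real.exp (‖θ‖ * Bf) * ‖vL‖ := by
      simp only [norm_mul]
      rw [hnB, hsm]
      have heq : ‖E‖ * y ^ 2 * (1 / y ^ 2 * ‖vL‖) = ‖E‖ * ‖vL‖ := by
        field_simp
      rw [heq]
      exact mul_le_mul_of_nonneg_right hEb (norm_nonneg _)
    have main : ‖V‖ ≤ (Real.exp (‖θ‖ * Bf) * (‖θ‖ * Bf') * y ^ 2
          + Real.exp (‖θ‖ * Bf) * (2 * |y|)) * ‖φw‖ + Real.exp (‖θ‖ * Bf) * ‖vL‖ :=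
      le_trans (norm_add_le _ _) (add_le_add t1 t2)
    have step2 : (Real.exp (‖θ‖ * Bf) * (‖θ‖ * Bf') * y ^ 2
          + Real.exp (‖θ‖ * Bf) * (2 * |y|)) * ‖φw‖
        ≤ Real.exp (‖θ‖ * Bf) * (‖θ‖ * Bf' + 2) * (Real.exp (ℓ * ‖θ‖ * Bf) * γ ^ ℓ) := by
      have hc : Real.exp (‖θ‖ * Bf) * (‖θ‖ * Bf') * y ^ 2 + Real.exp (‖θ‖ * Bf) * (2 * |y|)
          ≤ Real.exp (‖θ‖ * Bf) * (‖θ‖ * Bf' + 2) := by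
        have hy1 : y ^ 2 ≤ 1 := le_trans hsq hγ1.le
        have e0 := Real.exp_pos (‖θ‖ * Bf)
        nlinarith [mul_nonneg (mul_nonneg e0.le (mul_nonneg (norm_nonneg θ) hBf'0))
            (sub_nonneg.2 hy1),
          mul_nonneg e0.le (sub_nonneg.2 haby)]
      have hφnn : (0:ℝ) ≤ ‖φw‖ := norm_nonneg _
      calc (Real.exp (‖θ‖ * Bf) * (‖θ‖ * Bf') * y ^ 2 + Real.exp (‖θ‖ * Bf) * (2 * |y|)) * ‖φw‖
          ≤ (Real.exp (‖θ‖ * Bf) * (‖θ‖ * Bf' + 2)) * ‖φw‖ :=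
            mul_le_mul_of_nonneg_right hc hφnn
        _ ≤ (Real.exp (‖θ‖ * Bf) * (‖θ‖ * Bf' + 2)) * (Real.exp (ℓ * ‖θ‖ * Bf) * γ ^ ℓ) := by
            apply mul_le_mul_of_nonneg_left ihV
            have : (0:ℝ) ≤ ‖θ‖ * Bf' + 2 := by positivity
            positivity
    have step3 : Real.exp (‖θ‖ * Bf) * ‖vL‖
        ≤ Real.exp (‖θ‖ * Bf) * (Real.exp (ℓ * ‖θ‖ * Bf) *
            ((‖θ‖ * Bf' + 2) * ∑ j ∈ Finset.range ℓ, γ ^ j)) :=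
      mul_le_mul_of_nonneg_left hvLb hE0
    have final : Real.exp (‖θ‖ * Bf) * (‖θ‖ * Bf' + 2) * (Real.exp (ℓ * ‖θ‖ * Bf) * γ ^ ℓ)
          + Real.exp (‖θ‖ * Bf) * (Real.exp (ℓ * ‖θ‖ * Bf) *
            ((‖θ‖ * Bf' + 2) * ∑ j ∈ Finset.range ℓ, γ ^ j))
        = Real.exp ((p :: L).length * ‖θ‖ * Bf) *
            ((‖θ‖ * Bf' + 2) * ∑ j ∈ Finset.range (p :: L).length, γ ^ j) := by
      simp only [List.length_cons, Finset.sum_range_succ]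
      rw [show (((ℓ + 1 : ℕ)) : ℝ) * ‖θ‖ * Bf = ℓ * ‖θ‖ * Bf + ‖θ‖ * Bf by push_cast; ring,
        Real.exp_add]
      ring
    calc ‖V‖ ≤ _ := main
      _ ≤ Real.exp (‖θ‖ * Bf) * (‖θ‖ * Bf' + 2) * (Real.exp (ℓ * ‖θ‖ * Bf) * γ ^ ℓ)
          + Real.exp (‖θ‖ * Bf) * (Real.exp (ℓ * ‖θ‖ * Bf) *
            ((‖θ‖ * Bf' + 2) * ∑ j ∈ Finset.range ℓ, γ ^ j)) := add_le_add step2 step3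
      _ = _ := final



end CF
section Part3
open Set CF

variable {α : ℝ}

lemma branch_pos_above (hw : (0:ℝ) < w) :
    ∃ η > (0:ℝ), ∃ m : ℤ, ∀ y ∈ Ioo w (w + η), T α y = 1 / y - m ∧ y ≠ 0 := by
  set c : ℝ := 1 / w + 1 - α with hc
  set m : ℤ := ⌈c⌉ - 1 with hm
  have hmc : (m : ℝ) < c := by
    have := Int.ceil_lt_add_one c
    push_cast [hm]; push_cast at this; linarith
  have hcm1 : c ≤ (m : ℝ) + 1 := by
    have := Int.le_ceil c
    push_cast [hm]; linarith
  set q : ℝ := (m : ℝ) + α - 1 with hq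
  have hq1w : q < 1 / w := by rw [hq]; simp only [hc] at hmc; linarith
  have hw1 : (0:ℝ) < 1 / w := by positivity
  rcases le_or_gt q 0 with hq0 | hq0
  · refine ⟨1, one_pos, m, fun y hy => ?_⟩
    have hy0 : 0 < y := lt_trans hw hy.1
    have hilt : 1 / y < 1 / w := one_div_lt_one_div_of_lt hw hy.1
    have higt : q < 1 / y := lt_of_le_of_lt hq0 (by positivity)
    have hfl : ⌊1 / y + 1 - α⌋ = m := by
      rw [Int.floor_eq_iff]
      constructor
      · rw [hq] at higt; linarith
      · rw [hc] at hcm1; push_cast; linarith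
    refine ⟨?_, ne_of_gt hy0⟩
    simp only [T, ne_of_gt hy0, if_false, abs_of_pos hy0, hfl]
  · have hqw1 : q * w < 1 := by
      have := mul_lt_mul_of_pos_right hq1w hw
      rwa [one_div_mul_cancel (ne_of_gt hw)] at this
    have hwq : w < 1 / q := (lt_div_iff₀ hq0).2 (by linarith)
    refine ⟨1 / q - w, by linarith, m, fun y hy => ?_⟩
    have hy0 : 0 < y := lt_trans hw hy.1
    have hilt : 1 / y < 1 / w := one_div_lt_one_div_of_lt hw hy.1
    have hyq : y < 1 / q := by have := hy.2; linarith
    have higt : q < 1 / y := by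
      have hy0' : 0 < y := lt_trans hw hy.1
      have h1 : y * q < 1 := by
        have := mul_lt_mul_of_pos_right hyq hq0
        rwa [one_div_mul_cancel (ne_of_gt hq0)] at this
      exact (lt_div_iff₀ hy0').2 (by linarith)
    have hfl : ⌊1 / y + 1 - α⌋ = m := by
      rw [Int.floor_eq_iff]
      constructor
      · rw [hq] at higt; linarith
      · rw [hc] at hcm1; push_cast; linarith
    refine ⟨?_, ne_of_gt hy0⟩
    simp only [T, ne_of_gt hy0, if_false, abs_of_pos hy0, hfl]


lemma branch_pos_below (hw : (0:ℝ) < w) :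
    ∃ η > (0:ℝ), ∃ m : ℤ, ∀ y ∈ Ioo (w - η) w, T α y = 1 / y - m ∧ y ≠ 0 := by
  set c : ℝ := 1 / w + 1 - α with hc
  set m : ℤ := ⌊c⌋ with hm
  have hmc : c < (m : ℝ) + 1 := by
    have := Int.lt_floor_add_one c
    push_cast [hm]; linarith
  have hcm : (m : ℝ) ≤ c := Int.floor_le c
  set q : ℝ := (m : ℝ) + α with hq
  have hw1 : (0:ℝ) < 1 / w := by positivity
  have hq1w : 1 / w < q := by rw [hq]; rw [hc] at hmc; linarith
  have hq0 : 0 < q := lt_trans hw1 hq1w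
  have hlo : 1 / q < w := by
    have h1 : 1 < q * w := by
      have := mul_lt_mul_of_pos_right hq1w hw
      rwa [one_div_mul_cancel (ne_of_gt hw)] at this
    exact (div_lt_iff₀ hq0).2 (by linarith)
  refine ⟨w - 1 / q, by linarith, m, fun y hy => ?_⟩
  have hyq : 1 / q < y := by have := hy.1; linarith
  have hy0 : 0 < y := lt_trans (by positivity) hyq
  have higt : 1 / w < 1 / y := one_div_lt_one_div_of_lt hy0 hy.2
  have hilt : 1 / y < q := by
    have h1 : 1 < q * y := by
      have h2 := mul_lt_mul_of_pos_left hyq hq0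
      rwa [mul_one_div, div_self (ne_of_gt hq0)] at h2
    exact (div_lt_iff₀ hy0).2 (by linarith)
  have hfl : ⌊1 / y + 1 - α⌋ = m := by
    rw [Int.floor_eq_iff]
    constructor
    · rw [hc] at hcm; linarith
    · rw [hq] at hilt; push_cast; linarith
  refine ⟨?_, ne_of_gt hy0⟩
  simp only [T, ne_of_gt hy0, if_false, abs_of_pos hy0, hfl]



lemma branch_above (hα : α ∈ Ioo (0:ℝ) 1) {w : ℝ} (hw : w ≠ 0) :
    ∃ η > (0:ℝ), ∃ (e : ℝ) (m : ℤ), (e = 1 ∨ e = -1) ∧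
      ∀ y ∈ Ioo w (w + η), T α y = e / y - m ∧ y ≠ 0 := by
  rcases hw.lt_or_gt with hneg | hpos
  · obtain ⟨η, hη, m, hm⟩ := branch_pos_below (α := α) (w := -w) (by linarith)
    have hηw : ∀ y ∈ Ioo w (w + η), -y ∈ Ioo (-w - η) (-w) := by
      intro y hy; exact ⟨by linarith [hy.2], by linarith [hy.1]⟩
    refine ⟨η, hη, -1, m, Or.inr rfl, fun y hy => ?_⟩
    obtain ⟨hT, hne⟩ := hm (-y) (hηw y hy)
    have hy0 : y ≠ 0 := fun h => hne (by rw [h]; ring)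
    refine ⟨?_, hy0⟩
    rw [← T_neg α y, hT]
    field_simp
  · obtain ⟨η, hη, m, hm⟩ := branch_pos_above (α := α) (w := w) hpos
    exact ⟨η, hη, 1, m, Or.inl rfl, fun y hy => (hm y hy)⟩

lemma branch_below (hα : α ∈ Ioo (0:ℝ) 1) {w : ℝ} (hw : w ≠ 0) :
    ∃ η > (0:ℝ), ∃ (e : ℝ) (m : ℤ), (e = 1 ∨ e = -1) ∧
      ∀ y ∈ Ioo (w - η) w, T α y = e / y - m ∧ y ≠ 0 := by
  rcases hw.lt_or_gt with hneg | hpos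
  · obtain ⟨η, hη, m, hm⟩ := branch_pos_above (α := α) (w := -w) (by linarith)
    have hηw : ∀ y ∈ Ioo (w - η) w, -y ∈ Ioo (-w) (-w + η) := by
      intro y hy; exact ⟨by linarith [hy.2], by linarith [hy.1]⟩
    refine ⟨η, hη, -1, m, Or.inr rfl, fun y hy => ?_⟩
    obtain ⟨hT, hne⟩ := hm (-y) (hηw y hy)
    have hy0 : y ≠ 0 := fun h => hne (by rw [h]; ring)
    refine ⟨?_, hy0⟩
    rw [← T_neg α y, hT]
    field_simp
  · obtain ⟨η, hη, m, hm⟩ := branch_pos_below (α := α) (w := w) hpos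
    exact ⟨η, hη, 1, m, Or.inl rfl, fun y hy => (hm y hy)⟩

end Part3
section Part4
open Set CF Filter

lemma const_contra (α : ℝ) (n : ℕ) (U : Set ℝ)
    (hd : ∀ x ∈ U, deriv ((T α)^[n]) x ≠ 0)
    (x δ : ℝ) (hδ : 0 < δ) (hIU : Ioo x (x + δ) ⊆ U) (c : ℝ)
    (hconst : ∀ t ∈ Ioo x (x + δ), (T α)^[n] t = c) : False := by
  have hmid : x + δ / 2 ∈ Ioo x (x + δ) := ⟨by linarith, by linarith⟩
  have hev : (T α)^[n] =ᶠ[nhds (x + δ / 2)] fun _ => c :=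
    Filter.eventually_of_mem (isOpen_Ioo.mem_nhds hmid) hconst
  have : deriv ((T α)^[n]) (x + δ / 2) = 0 := by
    rw [hev.deriv_eq]; exact deriv_const _ _
  exact hd _ (hIU hmid) this

lemma dc_cont (α : ℝ) : ∀ (L : List (ℝ × ℤ)) (s : Set ℝ),
    (∀ t ∈ s, Ok α L t) → ContinuousOn (Dc L) s ∧ ContinuousOn (Bc L) s := by
  intro L
  induction L with
  | nil =>
    intro s _
    constructor
    · show ContinuousOn (fun _ => (1:ℝ)) s
      exact continuousOn_const
    · show ContinuousOn (fun t => t) s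
      exact continuousOn_id
  | cons p L ih =>
    intro s hok
    have ht0 : ∀ t ∈ s, t ≠ 0 := fun t ht => (hok t ht).2.2.1
    have hbr : ContinuousOn (Br p) s := by
      apply ContinuousOn.sub _ continuousOn_const
      exact ContinuousOn.div continuousOn_const continuousOn_id ht0
    have hok' : ∀ y ∈ Br p '' s, Ok α L y := by
      rintro y ⟨t, ht, rfl⟩; exact (hok t ht).2.2.2
    obtain ⟨ihD, ihB⟩ := ih (Br p '' s) hok'
    constructor
    · show ContinuousOn (fun t => (-p.1 / t ^ 2) * Dc L (Br p t)) s
      apply ContinuousOn.mul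
      · exact ContinuousOn.div continuousOn_const (continuousOn_id.pow 2)
          (fun t ht => pow_ne_zero 2 (ht0 t ht))
      · exact ihD.comp hbr (mapsTo_image _ _)
    · show ContinuousOn (fun t => Bc L (Br p t)) s
      exact ihB.comp hbr (mapsTo_image _ _)

lemma wzero_contra (α : ℝ) (hα : α ∈ Ioo (0:ℝ) 1) (n j : ℕ) (hjn : j < n)
    (U : Set ℝ) (hU : IsOpen U) (hUI : U ⊆ Icc (α - 1) α)
    (hcont : ContinuousOn ((T α)^[n]) U)
    (hd : ∀ x ∈ U, deriv ((T α)^[n]) x ≠ 0)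
    (x : ℝ) (hx : x ∈ U) (δ : ℝ) (hδ : 0 < δ) (hIU : Ioo x (x + δ) ⊆ U)
    (B : ℝ → ℝ)
    (hB : ∀ t ∈ Ioo x (x + δ), (T α)^[j] t = B t)
    (hBcont : ContinuousOn B (Ioo x (x + δ)))
    (htend : Tendsto B (nhdsWithin x (Ioi x)) (nhds 0)) : False := by
  by_cases hzero : ∃ ε > (0:ℝ), ∀ t ∈ Ioo x (x + min δ ε), B t = 0
  · obtain ⟨ε, hε, hz⟩ := hzero
    refine const_contra α n U hd x (min δ ε) (lt_min hδ hε)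
      (fun t ht => hIU ⟨ht.1, lt_of_lt_of_le ht.2 (by simp [min_le_left])⟩) 0 ?_
    intro t ht
    have htδ : t ∈ Ioo x (x + δ) :=
      ⟨ht.1, lt_of_lt_of_le ht.2 (by simp [min_le_left])⟩
    have h1 : (T α)^[n] t = (T α)^[n - j] ((T α)^[j] t) := by
      rw [← Function.iterate_add_apply]
      congr 1
      omega
    rw [h1, hB t htδ, hz t ht, T_iterate_zero]
  · push_neg at hzero
    have hTx : ContinuousAt ((T α)^[n]) x := hcont.continuousAt (hU.mem_nhds hx)
    -- key claim: the (n-j-1)-iterate is constant on Ico (α-1) α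
    have hclaim : ∀ β ∈ Ico (α - 1) α, (T α)^[n - j - 1] β = (T α)^[n] x := by
      intro β hβ
      by_contra hne
      have hr : 0 < dist ((T α)^[n - j - 1] β) ((T α)^[n] x) := dist_pos.2 hne
      obtain ⟨ε, hε, hball⟩ := Metric.continuousAt_iff.1 hTx _ hr
      obtain ⟨t₁, ht₁, hBt₁⟩ := hzero ε hε
      have ht₁δ : t₁ ∈ Ioo x (x + δ) :=
        ⟨ht₁.1, lt_of_lt_of_le ht₁.2 (by simp [min_le_left])⟩
      -- choose m
      obtain ⟨m, hm⟩ := exists_nat_gt (1 / |B t₁| + 1 - β)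
      have habs : 0 < |B t₁| := abs_pos.2 hBt₁
      have hm1 : 1 ≤ m := by
        rcases Nat.eq_zero_or_pos m with h0 | h1
        · subst h0
          push_cast at hm
          have hpos : 0 < 1 / |B t₁| := by positivity
          have h2 := hβ.2
          have h3 := hα.2
          linarith
        · exact h1
      have hmβpos : (0:ℝ) < (m:ℝ) + β := by
        have : (1:ℝ) ≤ (m:ℝ) := by exact_mod_cast hm1
        have := hβ.1; have := hα.1; nlinarith
      have hsmall : 1 / ((m:ℝ) + β) < |B t₁| := by
        have h1 : 1 / |B t₁| < (m:ℝ) + β := by linarith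
        calc 1 / ((m:ℝ) + β) < 1 / (1 / |B t₁|) :=
              one_div_lt_one_div_of_lt (by positivity) h1
          _ = |B t₁| := by field_simp
      have hspos : 0 < 1 / ((m:ℝ) + β) := by positivity
      -- find t' with |B t'| small
      have hev1 : ∀ᶠ t in nhdsWithin x (Ioi x), |B t| < 1 / ((m:ℝ) + β) := by
        have := Metric.tendsto_nhds.1 htend _ hspos
        filter_upwards [this] with t ht
        simpa [Real.dist_eq] using ht
      have hev2 : Ioo x t₁ ∈ nhdsWithin x (Ioi x) := Ioo_mem_nhdsGT ht₁.1
      obtain ⟨t', ht'small, ht'mem⟩ := (hev1.and (eventually_mem_set.2 hev2)).exists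
      have ht'δ : t' ∈ Ioo x (x + δ) := ⟨ht'mem.1, lt_trans ht'mem.2 ht₁δ.2⟩
      have hsub : Icc t' t₁ ⊆ Ioo x (x + δ) := fun r hr =>
        ⟨lt_of_lt_of_le ht'mem.1 hr.1, lt_of_le_of_lt hr.2 ht₁δ.2⟩
      have hconB : ContinuousOn B (Icc t' t₁) := hBcont.mono hsub
      -- obtain t₀ with B t₀ = ± 1/(m+β)
      have hmain : ∃ t₀ ∈ Ioo x (x + min δ ε), (T α) (B t₀) = β := by
        rcases lt_or_gt_of_ne hBt₁ with hneg | hpos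
        · -- B t₁ < 0, use s = -1/(m+β)
          have hs1 : B t₁ < -(1 / ((m:ℝ) + β)) := by
            rw [abs_of_neg hneg] at hsmall; linarith
          have hs2 : -(1 / ((m:ℝ) + β)) < B t' := by
            have := abs_lt.1 ht'small; linarith [this.1]
          obtain ⟨t₀, ht₀, hBt₀⟩ := intermediate_value_Ioo' (le_of_lt ht'mem.2) hconB
            (show -(1 / ((m:ℝ) + β)) ∈ Ioo (B t₁) (B t') from ⟨hs1, hs2⟩)
          refine ⟨t₀, ⟨lt_trans ht'mem.1 ht₀.1, lt_trans ht₀.2 ht₁.2⟩, ?_⟩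
          rw [hBt₀]
          have := T_at_inv α hα β hβ m hm1 (-1) (Or.inr rfl)
          rw [show -(1 / ((m:ℝ) + β)) = -1 / ((m:ℝ) + β) by ring]
          exact this
        · -- B t₁ > 0, use s = 1/(m+β)
          have hs1 : B t' < 1 / ((m:ℝ) + β) := by
            have := abs_lt.1 ht'small; linarith [this.2]
          have hs2 : 1 / ((m:ℝ) + β) < B t₁ := by
            rw [abs_of_pos hpos] at hsmall; linarith
          obtain ⟨t₀, ht₀, hBt₀⟩ := intermediate_value_Ioo (le_of_lt ht'mem.2) hconB
            (show 1 / ((m:ℝ) + β) ∈ Ioo (B t') (B t₁) from ⟨hs1, hs2⟩)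
          refine ⟨t₀, ⟨lt_trans ht'mem.1 ht₀.1, lt_trans ht₀.2 ht₁.2⟩, ?_⟩
          rw [hBt₀]
          have := T_at_inv α hα β hβ m hm1 1 (Or.inl rfl)
          rw [show (1:ℝ) / ((m:ℝ) + β) = 1 / ((m:ℝ) + β) by ring]
          exact this
      obtain ⟨t₀, ht₀, hTt₀⟩ := hmain
      have ht₀δ : t₀ ∈ Ioo x (x + δ) :=
        ⟨ht₀.1, lt_of_lt_of_le ht₀.2 (by simp [min_le_left])⟩
      have hTj1 : (T α)^[j + 1] t₀ = β := by
        rw [Function.iterate_succ_apply', hB t₀ ht₀δ, hTt₀]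
      have hTn : (T α)^[n] t₀ = (T α)^[n - j - 1] β := by
        conv_lhs => rw [show n = (n - j - 1) + (j + 1) by omega, Function.iterate_add_apply]
        rw [hTj1]
      have hdist : dist t₀ x < ε := by
        rw [Real.dist_eq, abs_of_pos (by linarith [ht₀.1] : (0:ℝ) < t₀ - x)]
        have := ht₀.2
        have : t₀ < x + ε := lt_of_lt_of_le this (by simp [min_le_right])
        linarith
      have := hball hdist
      rw [hTn] at this
      exact lt_irrefl _ this
    -- now T^[n] is constant on the interval
    refine const_contra α n U hd x δ hδ hIU ((T α)^[n] x) ?_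
    intro t ht
    have h1 : (T α)^[j + 1] t ∈ Ico (α - 1) α := by
      rw [Function.iterate_succ_apply']
      exact T_mem_Ico α hα _
    conv_lhs => rw [show n = (n - j - 1) + (j + 1) by omega, Function.iterate_add_apply]
    exact hclaim _ h1

end Part4
section Part5
open Set CF Filter

lemma construct (α : ℝ) (hα : α ∈ Ioo (0:ℝ) 1) (n : ℕ)
    (U : Set ℝ) (hU : IsOpen U) (hUI : U ⊆ Icc (α - 1) α)
    (hcont : ContinuousOn ((T α)^[n]) U)
    (hd : ∀ x ∈ U, deriv ((T α)^[n]) x ≠ 0)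
    (x : ℝ) (hx : x ∈ U) :
    ∀ j, j ≤ n → ∃ (L : List (ℝ × ℤ)) (δ : ℝ), 0 < δ ∧ Ioo x (x + δ) ⊆ U ∧
      L.length = j ∧ (∀ p ∈ L, p.1 = 1 ∨ p.1 = -1) ∧
      (∀ k, k ≤ j → ∀ t ∈ Ioo x (x + δ), (T α)^[k] t = Bc (L.take k) t) ∧
      (∀ k, k < j → ∀ t ∈ Ico x (x + δ),
        Bc (L.take k) t ∈ Icc (α - 1) α ∧ Bc (L.take k) t ≠ 0) := by
  have hkey := key α hα (fun _ => 0) (fun _ => 0) (fun z _ => hasDerivAt_const z 0) 0 0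
    (fun z _ => by simp) (fun z _ => by simp) 0
  intro j
  induction j with
  | zero =>
    intro _
    obtain ⟨ε, hε, hball⟩ := Metric.isOpen_iff.1 hU x hx
    refine ⟨[], ε, hε, ?_, rfl, by simp, ?_, by simp⟩
    · intro t ht
      apply hball
      rw [Metric.mem_ball, Real.dist_eq, abs_of_pos (by linarith [ht.1] : (0:ℝ) < t - x)]
      linarith [ht.2]
    · intro k hk t _
      interval_cases k
      simp [Bc]
  | succ j ihj =>
    intro hj1
    obtain ⟨L, δ, hδ, hIU, hlen, hC4, hC5, hC6⟩ := ihj (by omega)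
    have hjn : j < n := by omega
    have hLtake : L.take j = L := by rw [← hlen]; exact List.take_length
    have hBt : ∀ t ∈ Ioo x (x + δ), (T α)^[j] t = Bc L t := by
      intro t ht
      have := hC5 j le_rfl t ht
      rwa [hLtake] at this
    have hokt : ∀ t ∈ Ico x (x + δ), Ok α L t := by
      intro t ht
      exact ok_of α L t hC4 (fun i hi => hC6 i (by omega) t ht)
    have hoko : ∀ t ∈ Ioo x (x + δ), Ok α L t :=
      fun t ht => hokt t (Ioo_subset_Ico_self ht)
    have hxIco : x ∈ Ico x (x + δ) := ⟨le_refl x, by linarith⟩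
    have hokx : Ok α L x := hokt x hxIco
    have hBx : HasDerivAt (Bc L) (Dc L x) x := (hkey L x hokx).1
    set w : ℝ := Bc L x with hwdef
    have htend : Tendsto (Bc L) (nhdsWithin x (Ioi x)) (nhds w) :=
      (hBx.continuousAt.tendsto).mono_left nhdsWithin_le_nhds
    have hIoomem : Ioo x (x + δ) ∈ nhdsWithin x (Ioi x) :=
      Ioo_mem_nhdsGT (by linarith : x < x + δ)
    have hTmemIcc : ∀ t ∈ Ioo x (x + δ), (T α)^[j] t ∈ Icc (α - 1) α := by
      intro t ht
      cases j with
      | zero => exact hUI (hIU ht)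
      | succ i =>
        rw [Function.iterate_succ_apply']
        have := T_mem_Ico α hα ((T α)^[i] t)
        exact ⟨this.1, this.2.le⟩
    have hwI : w ∈ Icc (α - 1) α := by
      apply isClosed_Icc.mem_of_tendsto htend
      filter_upwards [hIoomem] with t ht
      rw [← hBt t ht]
      exact hTmemIcc t ht
    by_cases hw0 : w = 0
    · exfalso
      obtain ⟨hDcont, hBcont⟩ := dc_cont α L (Ioo x (x + δ)) hoko
      refine wzero_contra α hα n j hjn U hU hUI hcont hd x hx δ hδ hIU (Bc L) hBt hBcont ?_
      rw [← hw0]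
      exact htend
    · -- w ≠ 0 : extend the branch list
      obtain ⟨hDcont, hBcont⟩ := dc_cont α L (Ioo x (x + δ)) hoko
      have hDne : ∀ t ∈ Ioo x (x + δ), Dc L t ≠ 0 := by
        intro t ht h0
        have h2 := (hkey L t (hoko t ht)).2.1
        rw [h0] at h2
        simp at h2
        linarith
      have hderiv : ∀ t ∈ Ioo x (x + δ), deriv (Bc L) t = Dc L t :=
        fun t ht => ((hkey L t (hoko t ht)).1).deriv
      -- sign dichotomy
      have hsign : (∀ t ∈ Ioo x (x + δ), 0 < Dc L t) ∨ (∀ t ∈ Ioo x (x + δ), Dc L t < 0) := by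
        by_contra hcon
        push_neg at hcon
        obtain ⟨⟨t₁, ht₁, h1⟩, t₂, ht₂, h2⟩ := hcon
        have h1' : Dc L t₁ < 0 := lt_of_le_of_ne h1 (hDne t₁ ht₁)
        have h2' : 0 < Dc L t₂ := lt_of_le_of_ne h2 (Ne.symm (hDne t₂ ht₂))
        have husub : uIcc t₁ t₂ ⊆ Ioo x (x + δ) :=
          (ordConnected_Ioo).uIcc_subset ht₁ ht₂
        have h0mem : (0:ℝ) ∈ uIcc (Dc L t₁) (Dc L t₂) := by
          rw [Set.mem_uIcc]
          left; exact ⟨h1'.le, h2'.le⟩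
        obtain ⟨t₀, ht₀, h0⟩ := intermediate_value_uIcc (hDcont.mono husub) h0mem
        exact hDne t₀ (husub ht₀) h0
      -- the two monotonicity cases
      rcases hsign with hpos | hneg
      · -- B strictly increasing; approach w from above
        have hmono : StrictMonoOn (Bc L) (Ioo x (x + δ)) := by
          apply strictMonoOn_of_deriv_pos (convex_Ioo x (x + δ)) hBcont
          intro t ht
          rw [interior_Ioo] at ht
          rw [hderiv t ht]
          exact hpos t ht
        have hside : ∀ t ∈ Ioo x (x + δ), w < Bc L t := by
          intro t ht
          have ht' : (x + t) / 2 ∈ Ioo x (x + δ) := ⟨by linarith [ht.1], by linarith [ht.2, ht.1]⟩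
          have h1 : w ≤ Bc L ((x + t) / 2) := by
            apply le_of_tendsto htend
            filter_upwards [Ioo_mem_nhdsGT (show x < (x + t) / 2 by linarith [ht.1])]
              with s hs
            have hsmem : s ∈ Ioo x (x + δ) := ⟨hs.1, by linarith [hs.2, ht.2, ht.1]⟩
            exact (hmono hsmem ht' hs.2).le
          have h2 : Bc L ((x + t) / 2) < Bc L t := hmono ht' ht (by linarith [ht.1])
          linarith
        obtain ⟨η, hη, e, m, he, hbr⟩ := branch_above hα hw0
        have hev : ∀ᶠ t in nhdsWithin x (Ioi x),
            Bc L t ∈ Ioo w (w + η) ∧ t ∈ Ioo x (x + δ) := by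
          have h1 : ∀ᶠ t in nhdsWithin x (Ioi x), |Bc L t - w| < η := by
            have := Metric.tendsto_nhds.1 htend _ hη
            filter_upwards [this] with t ht
            simpa [Real.dist_eq] using ht
          filter_upwards [h1, eventually_mem_set.2 hIoomem] with t h1t h2t
          exact ⟨⟨hside t h2t, by linarith [(abs_lt.1 h1t).2]⟩, h2t⟩
        obtain ⟨u, hu, huP⟩ := mem_nhdsGT_iff_exists_Ioo_subset.1 hev
        set δ₂ : ℝ := min (u - x) δ with hδ₂def
        have hδ₂ : 0 < δ₂ := lt_min (by simpa using hu) hδ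
        have hsub2 : Ioo x (x + δ₂) ⊆ Ioo x u := fun t ht =>
          ⟨ht.1, by have := ht.2; have : δ₂ ≤ u - x := min_le_left _ _; linarith⟩
        have hsubδ : Ioo x (x + δ₂) ⊆ Ioo x (x + δ) := fun t ht =>
          ⟨ht.1, by have := ht.2; have : δ₂ ≤ δ := min_le_right _ _; linarith⟩
        have hprop : ∀ t ∈ Ioo x (x + δ₂), Bc L t ∈ Ioo w (w + η) ∧ t ∈ Ioo x (x + δ) :=
          fun t ht => huP (hsub2 ht)
        refine ⟨L ++ [(e, m)], δ₂, hδ₂, fun t ht => hIU (hsubδ ht), by simp [hlen],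
          ?_, ?_, ?_⟩
        · intro q hq
          rcases List.mem_append.1 hq with h | h
          · exact hC4 q h
          · simp at h
            rw [h]
            exact he
        · -- C5
          intro k hk t ht
          rcases Nat.lt_or_ge k (j + 1) with hkj | hkj
          · have hkj' : k ≤ j := by omega
            rw [List.take_append_of_le_length (by omega : k ≤ L.length)]
            exact hC5 k hkj' t (hsubδ ht)
          · have hkeq : k = j + 1 := by omega
            subst hkeq
            rw [List.take_of_length_le (by simp [hlen] : (L ++ [(e, m)]).length ≤ j + 1),
              Bc_append_singleton]
            have h1 := (hbr (Bc L t) (hprop t ht).1).1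
            show (T α)^[j + 1] t = Br (e, m) (Bc L t)
            rw [Function.iterate_succ_apply', hBt t (hsubδ ht)]
            rw [h1]
            rfl
        · -- C6
          intro k hk t ht
          rcases Nat.lt_or_ge k j with hkj | hkj
          · rw [List.take_append_of_le_length (by omega : k ≤ L.length)]
            exact hC6 k hkj t ⟨ht.1, by
              have h2 := ht.2
              have : δ₂ ≤ δ := min_le_right _ _
              linarith⟩
          · have hkeq : k = j := by omega
            subst hkeq
            rw [List.take_append_of_le_length (by omega : k ≤ L.length), hLtake]
            rcases eq_or_lt_of_le ht.1 with hteq | htlt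
            · rw [← hteq]
              exact ⟨hwI, hw0⟩
            · have htmem : t ∈ Ioo x (x + δ₂) := ⟨htlt, ht.2⟩
              have h1 := (hprop t htmem).1
              constructor
              · rw [← hBt t (hsubδ htmem)]
                exact hTmemIcc t (hsubδ htmem)
              · exact (hbr (Bc L t) h1).2
      · -- B strictly decreasing; approach w from below
        have hmono : StrictAntiOn (Bc L) (Ioo x (x + δ)) := by
          apply strictAntiOn_of_deriv_neg (convex_Ioo x (x + δ)) hBcont
          intro t ht
          rw [interior_Ioo] at ht
          rw [hderiv t ht]
          exact hneg t ht
        have hside : ∀ t ∈ Ioo x (x + δ), Bc L t < w := by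
          intro t ht
          have ht' : (x + t) / 2 ∈ Ioo x (x + δ) := ⟨by linarith [ht.1], by linarith [ht.2, ht.1]⟩
          have h1 : Bc L ((x + t) / 2) ≤ w := by
            apply ge_of_tendsto htend
            filter_upwards [Ioo_mem_nhdsGT (show x < (x + t) / 2 by linarith [ht.1])]
              with s hs
            have hsmem : s ∈ Ioo x (x + δ) := ⟨hs.1, by linarith [hs.2, ht.2, ht.1]⟩
            exact (hmono hsmem ht' hs.2).le
          have h2 : Bc L t < Bc L ((x + t) / 2) := hmono ht' ht (by linarith [ht.1])
          linarith
        obtain ⟨η, hη, e, m, he, hbr⟩ := branch_below hα hw0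
        have hev : ∀ᶠ t in nhdsWithin x (Ioi x),
            Bc L t ∈ Ioo (w - η) w ∧ t ∈ Ioo x (x + δ) := by
          have h1 : ∀ᶠ t in nhdsWithin x (Ioi x), |Bc L t - w| < η := by
            have := Metric.tendsto_nhds.1 htend _ hη
            filter_upwards [this] with t ht
            simpa [Real.dist_eq] using ht
          filter_upwards [h1, eventually_mem_set.2 hIoomem] with t h1t h2t
          exact ⟨⟨by linarith [(abs_lt.1 h1t).1], hside t h2t⟩, h2t⟩
        obtain ⟨u, hu, huP⟩ := mem_nhdsGT_iff_exists_Ioo_subset.1 hev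
        set δ₂ : ℝ := min (u - x) δ with hδ₂def
        have hδ₂ : 0 < δ₂ := lt_min (by simpa using hu) hδ
        have hsub2 : Ioo x (x + δ₂) ⊆ Ioo x u := fun t ht =>
          ⟨ht.1, by have := ht.2; have : δ₂ ≤ u - x := min_le_left _ _; linarith⟩
        have hsubδ : Ioo x (x + δ₂) ⊆ Ioo x (x + δ) := fun t ht =>
          ⟨ht.1, by have := ht.2; have : δ₂ ≤ δ := min_le_right _ _; linarith⟩
        have hprop : ∀ t ∈ Ioo x (x + δ₂), Bc L t ∈ Ioo (w - η) w ∧ t ∈ Ioo x (x + δ) :=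
          fun t ht => huP (hsub2 ht)
        refine ⟨L ++ [(e, m)], δ₂, hδ₂, fun t ht => hIU (hsubδ ht), by simp [hlen],
          ?_, ?_, ?_⟩
        · intro q hq
          rcases List.mem_append.1 hq with h | h
          · exact hC4 q h
          · simp at h
            rw [h]
            exact he
        · intro k hk t ht
          rcases Nat.lt_or_ge k (j + 1) with hkj | hkj
          · have hkj' : k ≤ j := by omega
            rw [List.take_append_of_le_length (by omega : k ≤ L.length)]
            exact hC5 k hkj' t (hsubδ ht)
          · have hkeq : k = j + 1 := by omega
            subst hkeq
            rw [List.take_of_length_le (by simp [hlen] : (L ++ [(e, m)]).length ≤ j + 1),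
              Bc_append_singleton]
            have h1 := (hbr (Bc L t) (hprop t ht).1).1
            show (T α)^[j + 1] t = Br (e, m) (Bc L t)
            rw [Function.iterate_succ_apply', hBt t (hsubδ ht)]
            rw [h1]
            rfl
        · intro k hk t ht
          rcases Nat.lt_or_ge k j with hkj | hkj
          · rw [List.take_append_of_le_length (by omega : k ≤ L.length)]
            exact hC6 k hkj t ⟨ht.1, by
              have h2 := ht.2
              have : δ₂ ≤ δ := min_le_right _ _
              linarith⟩
          · have hkeq : k = j := by omega
            subst hkeq
            rw [List.take_append_of_le_length (by omega : k ≤ L.length), hLtake]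
            rcases eq_or_lt_of_le ht.1 with hteq | htlt
            · rw [← hteq]
              exact ⟨hwI, hw0⟩
            · have htmem : t ∈ Ioo x (x + δ₂) := ⟨htlt, ht.2⟩
              have h1 := (hprop t htmem).1
              constructor
              · rw [← hBt t (hsubδ htmem)]
                exact hTmemIcc t (hsubδ htmem)
              · exact (hbr (Bc L t) h1).2

end Part5
section Part6
open Set CF Filter

lemma Sc_eq_sum (f : ℝ → ℝ) : ∀ (M : List (ℝ × ℤ)) (y : ℝ),
    Sc f M y = ∑ k ∈ Finset.range M.length, f (Bc (M.take k) y) := by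
  intro M
  induction M with
  | nil => intro y; simp [Sc]
  | cons p L ih =>
    intro y
    have h1 : Sc f (p :: L) y = f y + Sc f L (Br p y) := by simp [Sc]
    rw [h1, ih (Br p y)]
    rw [show (p :: L).length = L.length + 1 from rfl, Finset.sum_range_succ']
    have h2 : ∀ k, Bc (List.take (k + 1) (p :: L)) y = Bc (List.take k L) (Br p y) := by
      intro k
      simp [List.take_succ_cons, Bc]
    simp only [h2]
    have h3 : Bc (List.take 0 (p :: L)) y = y := rfl
    rw [h3]
    ring

theorem deriv_perturbed_weight_bound' (α : ℝ) (hα : α ∈ Ioo (0:ℝ) 1) (n : ℕ) (hn : 1 ≤ n)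
    (f f' : ℝ → ℝ) (hf : ∀ x ∈ Icc (α - 1) α, HasDerivAt f (f' x) x)
    (Bf Bf' : ℝ) (hBf : ∀ x ∈ Icc (α - 1) α, |f x| ≤ Bf)
    (hBf' : ∀ x ∈ Icc (α - 1) α, |f' x| ≤ Bf')
    (hC1 : Bf ≤ 1 ∧ Bf' ≤ 1) (θ : ℂ)
    (U : Set ℝ) (hU : IsOpen U) (hUI : U ⊆ Icc (α - 1) α)
    (hsm : ContDiffOn ℝ 2 ((T α)^[n]) U)
    (hd : ∀ x ∈ U, deriv ((T α)^[n]) x ≠ 0) :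
    ∀ x ∈ U,
      ‖deriv (fun y => Complex.exp
          (θ * ((∑ k ∈ Finset.range n, f ((T α)^[k] y) : ℝ) : ℂ))
          / ((deriv ((T α)^[n]) y : ℝ) : ℂ)) x‖
        ≤ Real.exp (n * ‖θ‖ * Bf) * (‖θ‖ * Bf' + 2)
            / (1 - max (α ^ 2) ((α - 1) ^ 2)) := by
  intro x hx
  have hγ0 : 0 < max (α ^ 2) ((α - 1) ^ 2) := lt_max_of_lt_left (by nlinarith [hα.1])
  have hγ1 : max (α ^ 2) ((α - 1) ^ 2) < 1 := by
    apply max_lt <;> nlinarith [hα.1, hα.2]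
  have hBf'0 : 0 ≤ Bf' := le_trans (abs_nonneg _) (hBf' α ⟨by linarith [hα.2], le_refl _⟩)
  have hRHS0 : 0 ≤ Real.exp (n * ‖θ‖ * Bf) * (‖θ‖ * Bf' + 2)
      / (1 - max (α ^ 2) ((α - 1) ^ 2)) := by
    apply div_nonneg _ (by linarith)
    positivity
  set φ : ℝ → ℂ := fun y => Complex.exp
      (θ * ((∑ k ∈ Finset.range n, f ((T α)^[k] y) : ℝ) : ℂ))
      / ((deriv ((T α)^[n]) y : ℝ) : ℂ) with hφdef
  by_cases hdiff : DifferentiableAt ℝ φ x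
  · obtain ⟨L, δ, hδ, hIU, hlen, hC4, hC5, hC6⟩ :=
      construct α hα n U hU hUI (hsm.continuousOn) hd x hx n le_rfl
    have hokt : ∀ t ∈ Ico x (x + δ), Ok α L t := by
      intro t ht
      exact ok_of α L t hC4 (fun i hi => hC6 i (by omega) t ht)
    have hokx : Ok α L x := hokt x ⟨le_refl x, by linarith⟩
    obtain ⟨hB, hD2, hS3, hval, v, hv, hvb⟩ := key α hα f f' hf Bf Bf' hBf hBf' θ L x hokx
    set φA : ℝ → ℂ := fun t => Complex.exp (θ * ((Sc f L t : ℝ) : ℂ)) / ((Dc L t : ℝ) : ℂ)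
      with hφAdef
    have hsum : ∀ t ∈ Ioo x (x + δ), (∑ k ∈ Finset.range n, f ((T α)^[k] t)) = Sc f L t := by
      intro t ht
      rw [Sc_eq_sum f L t, hlen]
      apply Finset.sum_congr rfl
      intro k hk
      congr 1
      exact hC5 k (le_of_lt (Finset.mem_range.1 hk)) t ht
    have hDeq : ∀ t ∈ Ioo x (x + δ), deriv ((T α)^[n]) t = Dc L t := by
      intro t ht
      have hEv : (T α)^[n] =ᶠ[nhds t] Bc L := by
        apply Filter.eventually_of_mem (isOpen_Ioo.mem_nhds ht)
        intro s hs
        have := hC5 n le_rfl s hs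
        rwa [List.take_of_length_le (le_of_eq hlen)] at this
      have hBs : HasDerivAt (Bc L) (Dc L t) t :=
        (key α hα f f' hf Bf Bf' hBf hBf' θ L t (hokt t (Ioo_subset_Ico_self ht))).1
      rw [hEv.deriv_eq, hBs.deriv]
    have hφeq : ∀ t ∈ Ioo x (x + δ), φ t = φA t := by
      intro t ht
      rw [hφdef, hφAdef]
      simp only
      rw [hsum t ht, hDeq t ht]
    have hIoo_mem : Ioo x (x + δ) ∈ nhdsWithin x (Ioi x) :=
      Ioo_mem_nhdsGT (by linarith)
    have hveq : φ x = φA x := by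
      have h1 : Tendsto φ (nhdsWithin x (Ioi x)) (nhds (φA x)) := by
        apply Tendsto.congr' (Filter.eventuallyEq_of_mem hIoo_mem
          (fun t ht => (hφeq t ht).symm))
        exact (hv.continuousAt.tendsto).mono_left nhdsWithin_le_nhds
      have h2 : Tendsto φ (nhdsWithin x (Ioi x)) (nhds (φ x)) :=
        (hdiff.continuousAt.tendsto).mono_left nhdsWithin_le_nhds
      exact tendsto_nhds_unique h2 h1
    have hW1 : HasDerivWithinAt φ (deriv φ x) (Ici x) x := (hdiff.hasDerivAt).hasDerivWithinAt
    have hW2 : HasDerivWithinAt φ v (Ici x) x := by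
      apply (hv.hasDerivWithinAt).congr_of_eventuallyEq _ hveq
      have hmem : Ici x ∩ Iio (x + δ) ∈ nhdsWithin x (Ici x) :=
        inter_mem_nhdsWithin (Ici x) (Iio_mem_nhds (by linarith))
      filter_upwards [hmem] with t ht
      rcases eq_or_lt_of_le (show x ≤ t from ht.1) with h | h
      · rw [← h]; exact hveq
      · exact hφeq t ⟨h, ht.2⟩
    have hdeq : deriv φ x = v := (uniqueDiffOn_Ici x x self_mem_Ici).eq_deriv _ hW1 hW2
    rw [hdeq]
    have hsum_le : ∑ j ∈ Finset.range n, (max (α ^ 2) ((α - 1) ^ 2)) ^ j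
        ≤ 1 / (1 - max (α ^ 2) ((α - 1) ^ 2)) := by
      rw [le_div_iff₀ (by linarith : (0:ℝ) < 1 - max (α ^ 2) ((α - 1) ^ 2))]
      have h1 := geom_sum_mul (max (α ^ 2) ((α - 1) ^ 2)) n
      have h2 : (0:ℝ) ≤ (max (α ^ 2) ((α - 1) ^ 2)) ^ n := by positivity
      nlinarith
    calc ‖v‖ ≤ Real.exp (L.length * ‖θ‖ * Bf) *
          ((‖θ‖ * Bf' + 2) * ∑ j ∈ Finset.range L.length, (max (α ^ 2) ((α - 1) ^ 2)) ^ j) :=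
        hvb
      _ = Real.exp (n * ‖θ‖ * Bf) *
          ((‖θ‖ * Bf' + 2) * ∑ j ∈ Finset.range n, (max (α ^ 2) ((α - 1) ^ 2)) ^ j) := by
        rw [hlen]
      _ ≤ Real.exp (n * ‖θ‖ * Bf) *
          ((‖θ‖ * Bf' + 2) * (1 / (1 - max (α ^ 2) ((α - 1) ^ 2)))) := by
        apply mul_le_mul_of_nonneg_left _ (Real.exp_nonneg _)
        apply mul_le_mul_of_nonneg_left hsum_le (by positivity)
      _ = Real.exp (n * ‖θ‖ * Bf) * (‖θ‖ * Bf' + 2)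
          / (1 - max (α ^ 2) ((α - 1) ^ 2)) := by
        ring
  · rw [deriv_zero_of_not_differentiableAt hdiff, norm_zero]
    exact hRHS0

end Part6

/-- for `α ∈ (0,1)`, `n ≥ 1`, `f` of class `C¹` with `‖f‖_{C¹} ≤ 1` and
`θ ∈ ℂ`, on the interior of each cylinder of `𝒫_n` (an open set where `T_α^n` is smooth
with nonvanishing derivative) we have
`|(e^{θ S_n f}/(T_α^n)')'| ≤ e^{n|θ|‖f‖_∞} (|θ|‖f'‖_∞ + 2)/(1-γ_α)`. -/
theorem deriv_perturbed_weight_bound (α : ℝ) (hα : α ∈ Ioo (0:ℝ) 1) (n : ℕ) (hn : 1 ≤ n)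
    (f f' : ℝ → ℝ) (hf : ∀ x ∈ Icc (α - 1) α, HasDerivAt f (f' x) x)
    (Bf Bf' : ℝ) (hBf : ∀ x ∈ Icc (α - 1) α, |f x| ≤ Bf)
    (hBf' : ∀ x ∈ Icc (α - 1) α, |f' x| ≤ Bf')
    (hC1 : Bf ≤ 1 ∧ Bf' ≤ 1) (θ : ℂ)
    (U : Set ℝ) (hU : IsOpen U) (hUI : U ⊆ Icc (α - 1) α)
    (hsm : ContDiffOn ℝ 2 ((T α)^[n]) U)
    (hd : ∀ x ∈ U, deriv ((T α)^[n]) x ≠ 0) :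
    ∀ x ∈ U,
      ‖deriv (fun y => Complex.exp
          (θ * ((∑ k ∈ Finset.range n, f ((T α)^[k] y) : ℝ) : ℂ))
          / ((deriv ((T α)^[n]) y : ℝ) : ℂ)) x‖
        ≤ Real.exp (n * ‖θ‖ * Bf) * (‖θ‖ * Bf' + 2)
            / (1 - max (α ^ 2) ((α - 1) ^ 2)) :=
  deriv_perturbed_weight_bound' α hα n hn f f' hf Bf Bf' hBf hBf' hC1 θ U hU hUI hsm hd
end

section
/- For α, β ∈ (0,1), the L¹([0,1]) distance between x ↦ log|x+α−1| and x ↦ log|x+β−1| is O(−|α−β|·log|α−β|) as |α−β| → 0; more precisely there is a constant C such that ∫_0^1 | log|x+α−1| − log|x+β−1| | dx ≤ C(|α−β| + |α−β|·|log|α−β||) for all α ≠ β in (0,1). -/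
open Set MeasureTheory

/-- Unconditional interval integrability of `Real.log`. -/
lemma intervalIntegrable_log'' (a b : ℝ) : IntervalIntegrable Real.log volume a b := by
  have H : ∀ c : ℝ, 0 ≤ c → IntervalIntegrable Real.log volume 0 c := by
    intro c hc
    have hint : IntervalIntegrable (fun x : ℝ => 2 * x ^ (-(1/2) : ℝ) + x) volume 0 c :=
      ((intervalIntegral.intervalIntegrable_rpow' (by norm_num)).const_mul 2).add
        (continuous_id.intervalIntegrable 0 c)
    refine hint.mono_fun Real.measurable_log.aestronglyMeasurable ?_
    rw [uIoc_of_le hc]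
    filter_upwards [ae_restrict_mem measurableSet_Ioc] with x hx
    have hx0 : 0 < x := hx.1
    have hrpow : x ^ (-(1/2) : ℝ) = (Real.sqrt x)⁻¹ := by
      rw [Real.sqrt_eq_rpow, ← Real.rpow_neg hx0.le]
    have hs : 0 < Real.sqrt x := Real.sqrt_pos.2 hx0
    rw [Real.norm_eq_abs, Real.norm_eq_abs]
    have hnn : 0 ≤ 2 * x ^ (-(1/2) : ℝ) + x := by
      rw [hrpow]; positivity
    rw [abs_of_nonneg hnn]
    rcases le_or_gt x 1 with h1 | h1
    · rw [abs_of_nonpos (Real.log_nonpos hx0.le h1)]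
      have hlog : Real.log x = 2 * Real.log (Real.sqrt x) := by
        rw [Real.log_sqrt hx0.le]; ring
      have h2 : Real.log (Real.sqrt x)⁻¹ ≤ (Real.sqrt x)⁻¹ - 1 :=
        Real.log_le_sub_one_of_pos (by positivity)
      rw [Real.log_inv] at h2
      have h3 : -Real.log x ≤ 2 * (Real.sqrt x)⁻¹ := by
        rw [hlog]; nlinarith [inv_pos.2 hs]
      rw [hrpow]; linarith
    · rw [abs_of_nonneg (Real.log_nonneg h1.le)]
      have h2 : Real.log x ≤ x - 1 := Real.log_le_sub_one_of_pos hx0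
      have h3 : 0 ≤ x ^ (-(1/2) : ℝ) := by rw [hrpow]; positivity
      linarith
  have Hc : ∀ c : ℝ, IntervalIntegrable Real.log volume 0 c := by
    intro c
    rcases le_or_gt 0 c with hc | hc
    · exact H c hc
    · have h := H (-c) (by linarith)
      rw [IntervalIntegrable.iff_comp_neg] at h
      simpa [Real.log_neg_eq_log] using h
  exact (Hc a).symm.trans (Hc b)

/-- Unconditional formula for the integral of `Real.log`. -/
lemma integral_log_gen (p q : ℝ) :
    ∫ x in p..q, Real.log x
      = q * Real.log q - p * Real.log p - q + p := by
  have h0 : ∀ c : ℝ, 0 ≤ c → ∫ x in (0:ℝ)..c, Real.log x = c * Real.log c - c := by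
    intro c hc
    rcases eq_or_lt_of_le hc with rfl | hc
    · simp
    have hderiv : ∀ x ∈ Ioo (0:ℝ) c,
        HasDerivWithinAt (fun x : ℝ => x * Real.log x - x) (Real.log x) (Ioi x) x := by
      intro x hx
      have h := (Real.hasDerivAt_mul_log hx.1.ne').sub (hasDerivAt_id x)
      exact h.hasDerivWithinAt.congr_deriv (by ring)
    have hcont : ContinuousOn (fun x : ℝ => x * Real.log x - x) (Icc 0 c) :=
      (Real.continuous_mul_log.sub continuous_id).continuousOn
    have h := intervalIntegral.integral_eq_sub_of_hasDeriv_right_of_le hc.le hcont hderiv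
      (intervalIntegrable_log'' 0 c)
    simpa using h
  have h1 : ∀ c : ℝ, ∫ x in (0:ℝ)..c, Real.log x = c * Real.log c - c := by
    intro c
    rcases le_or_gt 0 c with hc | hc
    · exact h0 c hc
    · have heq : (∫ x in (0:ℝ)..c, Real.log x) = ∫ x in (0:ℝ)..c, Real.log (-x) := by
        simp [Real.log_neg_eq_log]
      rw [heq, intervalIntegral.integral_comp_neg (fun x => Real.log x), neg_zero,
        intervalIntegral.integral_symm, h0 (-c) (by linarith), Real.log_neg_eq_log]
      ring
  have hadd := intervalIntegral.integral_add_adjacent_intervals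
    (intervalIntegrable_log'' p 0) (intervalIntegrable_log'' 0 q)
  have hp : (∫ x in p..(0:ℝ), Real.log x) = -(p * Real.log p - p) := by
    rw [intervalIntegral.integral_symm, h1 p]
  rw [← hadd, hp, h1 q]
  ring

/-- Key estimate: `|s log s - t log t| ≤ 2 δ + δ |log δ|` for `0 < t < s ≤ 1`, `δ = s - t`. -/
lemma mul_log_diff {t s : ℝ} (ht : 0 < t) (hts : t < s) (hs : s ≤ 1) :
    |s * Real.log s - t * Real.log t|
      ≤ 2 * (s - t) + (s - t) * |Real.log (s - t)| := by
  set δ := s - t with hδ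
  have hδ0 : 0 < δ := by simp only [hδ]; linarith
  have hδ1 : δ ≤ 1 := by simp only [hδ]; linarith
  have hint : (∫ u in t..s, Real.log u) = s * Real.log s - t * Real.log t - δ := by
    rw [integral_log_gen]; simp only [hδ]; ring
  have hIa : IntervalIntegrable (fun u => -Real.log u) volume t s :=
    (intervalIntegrable_log'' t s).neg
  have hIb : IntervalIntegrable (fun v => -Real.log (v + t)) volume 0 δ := by
    have h := hIa.comp_add_right t
    simpa [hδ] using h
  have hIc : IntervalIntegrable (fun v => -Real.log v) volume 0 δ :=
    (intervalIntegrable_log'' 0 δ).neg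
  have hshift : (∫ u in t..s, -Real.log u) = ∫ v in (0:ℝ)..δ, -Real.log (v + t) := by
    rw [intervalIntegral.integral_comp_add_right (fun u => -Real.log u) t]
    norm_num [hδ]
  have hae : (fun v => -Real.log (v + t)) ≤ᵐ[volume.restrict (Icc (0:ℝ) δ)]
      fun v => -Real.log v := by
    have h0 : ∀ᵐ v : ℝ ∂volume, v ≠ 0 := by
      rw [ae_iff]
      simpa using Real.volume_singleton
    filter_upwards [ae_restrict_mem measurableSet_Icc, ae_restrict_of_ae h0] with v hv hv0
    have hv0' : 0 < v := lt_of_le_of_ne hv.1 (Ne.symm hv0)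
    have h := Real.log_le_log hv0' (by linarith : v ≤ v + t)
    simp only [neg_le_neg_iff]
    linarith
  have hmono : (∫ v in (0:ℝ)..δ, -Real.log (v + t)) ≤ ∫ v in (0:ℝ)..δ, -Real.log v :=
    intervalIntegral.integral_mono_ae_restrict hδ0.le hIb hIc hae
  have hval : (∫ v in (0:ℝ)..δ, -Real.log v) = δ - δ * Real.log δ := by
    rw [intervalIntegral.integral_neg, integral_log_gen]
    ring
  have hlognp : (∫ u in t..s, Real.log u) ≤ 0 := by
    have h := intervalIntegral.integral_nonneg (f := fun u => -Real.log u) (μ := volume) hts.le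
      (fun u hu => by
        have hl := Real.log_nonpos (by linarith [hu.1] : (0:ℝ) ≤ u) (by linarith [hu.2])
        simpa using neg_nonneg.2 hl)
    rw [intervalIntegral.integral_neg] at h
    linarith
  have hneg : (∫ u in t..s, -Real.log u) = -(∫ u in t..s, Real.log u) :=
    intervalIntegral.integral_neg
  have hbound : -(∫ u in t..s, Real.log u) ≤ δ - δ * Real.log δ := by
    rw [← hneg, hshift]; linarith
  have hprod : 0 ≤ δ * -Real.log δ :=
    mul_nonneg hδ0.le (by linarith [Real.log_nonpos hδ0.le hδ1])
  have hlogδ : |Real.log δ| = -Real.log δ := abs_of_nonpos (Real.log_nonpos hδ0.le hδ1)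
  rw [hlogδ, abs_le]
  constructor
  · nlinarith [hint, hbound]
  · nlinarith [hint, hlognp]

set_option maxHeartbeats 1000000 in
lemma log_aux_key {α β : ℝ} (hα : α ∈ Ioo (0:ℝ) 1) (hβ : β ∈ Ioo (0:ℝ) 1) (hab : α < β) :
    ∫ x in Icc (0:ℝ) 1, |Real.log (|x + α - 1|) - Real.log (|x + β - 1|)|
      ≤ 6 * ((β - α) + (β - α) * |Real.log (β - α)|) := by
  obtain ⟨hα0, hα1⟩ := hα
  obtain ⟨hβ0, hβ1⟩ := hβ
  set a := 1 - α with ha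
  set b := 1 - β with hb
  set δ := β - α with hδdef
  set m := (a + b) / 2 with hm
  clear_value a b δ m
  have hb0 : 0 < b := by simp only [hb]; linarith
  have hba : b < a := by simp only [ha, hb]; linarith
  have ha1 : a < 1 := by simp only [ha]; linarith
  have hδ0 : 0 < δ := by simp only [hδdef]; linarith
  have hδ1 : δ < 1 := by simp only [hδdef]; linarith
  have hδab : δ = a - b := by simp only [ha, hb, hδdef]; ring
  have hm0 : 0 < m := by simp only [hm]; linarith
  have hm1 : m < 1 := by simp only [hm]; linarith
  have hbm : b < m := by simp only [hm]; linarith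
  have hma : m < a := by simp only [hm]; linarith
  have hrw : ∀ x : ℝ, |Real.log (|x + α - 1|) - Real.log (|x + β - 1|)|
      = |Real.log (x - a) - Real.log (x - b)| := by
    intro x
    rw [show x + α - 1 = x - a by rw [ha]; ring, show x + β - 1 = x - b by rw [hb]; ring,
      Real.log_abs, Real.log_abs]
  simp_rw [hrw]
  have hIa : ∀ p q : ℝ, IntervalIntegrable (fun x => Real.log (x - a)) volume p q := by
    intro p q
    have h := (intervalIntegrable_log'' (p - a) (q - a)).comp_sub_right a
    simpa using h
  have hIb : ∀ p q : ℝ, IntervalIntegrable (fun x => Real.log (x - b)) volume p q := by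
    intro p q
    have h := (intervalIntegrable_log'' (p - b) (q - b)).comp_sub_right b
    simpa using h
  have hf : ∀ p q : ℝ, IntervalIntegrable
      (fun x => Real.log (x - a) - Real.log (x - b)) volume p q :=
    fun p q => (hIa p q).sub (hIb p q)
  rw [integral_Icc_eq_integral_Ioc, ← intervalIntegral.integral_of_le zero_le_one]
  have hsplit := intervalIntegral.integral_add_adjacent_intervals
    (f := fun x => |Real.log (x - a) - Real.log (x - b)|)
    ((hf 0 m).abs) ((hf m 1).abs)
  rw [← hsplit]
  have key : ∀ x c d : ℝ, 0 < |x - c| → |x - c| ≤ |x - d| →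
      Real.log (x - c) ≤ Real.log (x - d) := by
    intro x c d h1 h2
    rw [← Real.log_abs, ← Real.log_abs (x - d)]
    exact Real.log_le_log h1 h2
  have hne : ∀ c : ℝ, ∀ᵐ x : ℝ ∂volume, x ≠ c := by
    intro c
    rw [ae_iff]
    simpa using Real.volume_singleton
  have h1 : (∫ x in (0:ℝ)..m, |Real.log (x - a) - Real.log (x - b)|)
      = ∫ x in (0:ℝ)..m, (Real.log (x - a) - Real.log (x - b)) := by
    apply intervalIntegral.integral_congr_ae
    filter_upwards [hne b] with x hxb hxm
    rw [uIoc_of_le hm0.le] at hxm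
    have hx0 : 0 < x := hxm.1
    have hxm' : x ≤ m := hxm.2
    have hxm2 : 2 * x ≤ a + b := by rw [hm] at hxm'; linarith
    have hb' : 0 < |x - b| := abs_pos.2 (sub_ne_zero.2 hxb)
    have hle : |x - b| ≤ |x - a| := by
      rw [abs_of_neg (by linarith : x - a < 0), abs_le]
      constructor <;> [skip; skip] <;> linarith
    exact abs_of_nonneg (by linarith [key x b a hb' hle])
  have h2 : (∫ x in m..(1:ℝ), |Real.log (x - a) - Real.log (x - b)|)
      = -∫ x in m..(1:ℝ), (Real.log (x - a) - Real.log (x - b)) := by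
    rw [← intervalIntegral.integral_neg]
    apply intervalIntegral.integral_congr_ae
    filter_upwards [hne a] with x hxa hxm
    rw [uIoc_of_le hm1.le] at hxm
    have hxm' : m < x := hxm.1
    have hx1 : x ≤ 1 := hxm.2
    have hxm2 : a + b ≤ 2 * x := by rw [hm] at hxm'; linarith
    have ha' : 0 < |x - a| := abs_pos.2 (sub_ne_zero.2 hxa)
    have hle : |x - a| ≤ |x - b| := by
      rw [abs_of_pos (by linarith : (0:ℝ) < x - b), abs_le]
      constructor <;> [skip; skip] <;> linarith
    have hk := key x a b ha' hle
    rw [abs_of_nonpos (by linarith)]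
  rw [h1, h2]
  have hcomp : ∀ c p q : ℝ, (∫ x in p..q, Real.log (x - c))
      = (q - c) * Real.log (q - c) - (p - c) * Real.log (p - c) - (q - c) + (p - c) := by
    intro c p q
    rw [intervalIntegral.integral_comp_sub_right (fun x => Real.log x) c, integral_log_gen]
  have hI1 : (∫ x in (0:ℝ)..m, (Real.log (x - a) - Real.log (x - b)))
      = ((m - a) * Real.log (m - a) - (0 - a) * Real.log (0 - a) - (m - a) + (0 - a))
        - ((m - b) * Real.log (m - b) - (0 - b) * Real.log (0 - b) - (m - b) + (0 - b)) := by
    rw [intervalIntegral.integral_sub (hIa 0 m) (hIb 0 m), hcomp, hcomp]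
  have hI2 : (∫ x in m..(1:ℝ), (Real.log (x - a) - Real.log (x - b)))
      = ((1 - a) * Real.log (1 - a) - (m - a) * Real.log (m - a) - (1 - a) + (m - a))
        - ((1 - b) * Real.log (1 - b) - (m - b) * Real.log (m - b) - (1 - b) + (m - b)) := by
    rw [intervalIntegral.integral_sub (hIa m 1) (hIb m 1), hcomp, hcomp]
  rw [hI1, hI2]
  have hma' : m - a = -(δ/2) := by rw [hm, hδab]; ring
  have hmb' : m - b = δ/2 := by rw [hm, hδab]; ring
  have h0a : (0:ℝ) - a = -a := by ring
  have h0b : (0:ℝ) - b = -b := by ring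
  have h1a : 1 - a = α := by rw [ha]; ring
  have h1b : 1 - b = β := by rw [hb]; ring
  rw [hma', hmb', h0a, h0b, h1a, h1b, Real.log_neg_eq_log, Real.log_neg_eq_log,
    Real.log_neg_eq_log]
  have hlogδ2 : Real.log (δ/2) = Real.log δ - Real.log 2 :=
    Real.log_div hδ0.ne' two_ne_zero
  rw [hlogδ2]
  have hP := mul_log_diff hb0 hba ha1.le
  have hQ := mul_log_diff hα0 hab hβ1.le
  rw [← hδab] at hP
  rw [← hδdef] at hQ
  have hlogδneg : |Real.log δ| = -Real.log δ :=
    abs_of_nonpos (Real.log_nonpos hδ0.le hδ1.le)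
  rw [hlogδneg] at hP hQ ⊢
  have habs1 := abs_le.1 hP
  have habs2 := abs_le.1 hQ
  have hd2 : δ * Real.log 2 ≤ δ := by
    have h := Real.log_le_sub_one_of_pos (by norm_num : (0:ℝ) < 2)
    nlinarith
  have hd2' : 0 ≤ δ * Real.log 2 := mul_nonneg hδ0.le (Real.log_nonneg (by norm_num))
  have hdl : 0 ≤ δ * -Real.log δ :=
    mul_nonneg hδ0.le (by linarith [Real.log_nonpos hδ0.le hδ1.le])
  have hP2 := habs1.2
  have hQ2 := habs2.2
  ring_nf
  nlinarith [hP2, hQ2, hd2, hd2', hdl, hδ0]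

/-- there is a constant `C` such that for all `α ≠ β` in `(0,1)`,
`∫_0^1 | log|x+α-1| - log|x+β-1| | dx ≤ C (|α-β| + |α-β|·|log|α-β||)`. -/
theorem log_translates_L1_close :
    ∃ C : ℝ, ∀ α ∈ Ioo (0:ℝ) 1, ∀ β ∈ Ioo (0:ℝ) 1, α ≠ β →
      ∫ x in Icc (0:ℝ) 1, |Real.log (|x + α - 1|) - Real.log (|x + β - 1|)|
        ≤ C * (|α - β| + |α - β| * |Real.log (|α - β|)|) := by
  refine ⟨6, fun α hα β hβ hne => ?_⟩
  rcases hne.lt_or_gt with h | h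
  · have hk := log_aux_key hα hβ h
    have habs : |α - β| = β - α := by rw [abs_sub_comm]; exact abs_of_pos (by linarith)
    rw [habs]
    exact hk
  · have hk := log_aux_key hβ hα h
    have habs : |α - β| = α - β := abs_of_pos (by linarith)
    rw [habs]
    calc ∫ x in Icc (0:ℝ) 1, |Real.log (|x + α - 1|) - Real.log (|x + β - 1|)|
        = ∫ x in Icc (0:ℝ) 1, |Real.log (|x + β - 1|) - Real.log (|x + α - 1|)| := by
          exact integral_congr_ae (ae_of_all _ fun x => abs_sub_comm _ _)
      _ ≤ 6 * ((α - β) + (α - β) * |Real.log (α - β)|) := hk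
end
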